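/- Exclusion principle: let M,N ∈ ℕ with M+N ≥ 1, and set q₊ = −1/(M+N), q₋ = (M−N)/(M+N). Let x ∈ H_ℝ be a unit vector and x^{⊗2n} ∈ K_n the simple tensor with all factors equal to x. Then ⟨x^{⊗2n}, x^{⊗2n}⟩_{q₊,q₋} > 0 for all n ≤ M, and ⟨x^{⊗2n}, x^{⊗2n}⟩_{q₊,q₋} = 0 for all n > M; in particular at most M identical particles can occupy the same state x⊗x. -/

import Mathlib

open scoped ComplexOrder

noncomputable section

namespace TypeB

/-- The nontrivial orbits (cycles) of a permutation. -/
def ntOrbits {X : Type*} (σ : Equiv.Perm X) : Set (Set X) :=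
  {O | ∃ i : X, σ i ≠ i ∧ O = {j | σ.SameCycle i j}}

def negSet (B : Set ℤ) : Set ℤ := (fun x : ℤ => -x) '' B

def negOrbits (σ : Equiv.Perm ℤ) : Set (Set ℤ) := {O ∈ ntOrbits σ | negSet O = O}

def posOrbits (σ : Equiv.Perm ℤ) : Set (Set ℤ) := {O ∈ ntOrbits σ | negSet O ≠ O}

def expPlus (σ : Equiv.Perm ℤ) : ℕ :=
  (∑ᶠ O ∈ posOrbits σ, (O.ncard - 1)) / 2 + ∑ᶠ O ∈ negOrbits σ, (O.ncard / 2 - 1)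

def negCount (σ : Equiv.Perm ℤ) : ℕ := (negOrbits σ).ncard

def phi (qp qm : ℂ) (σ : Equiv.Perm ℤ) : ℂ := qp ^ expPlus σ * qm ^ negCount σ

def Bset (n : ℕ) : Set (Equiv.Perm ℤ) :=
  {σ | (∀ i : ℤ, σ (-i) = -σ i) ∧ ∀ i : ℤ, (n : ℤ) < |i| → σ i = i}

/-- The classification set of parameters (Theorem 1.1). -/
def ClassSet (qp qm : ℂ) : Prop :=
  (∃ (M N : ℕ) (ε : ℤ), (ε = 1 ∨ ε = -1) ∧ M + N ≠ 0 ∧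
      qp = (ε : ℂ) / ((M : ℂ) + (N : ℂ)) ∧
      qm = ((M : ℂ) - (N : ℂ)) / ((M : ℂ) + (N : ℂ))) ∨
  (qp = 0 ∧ ∃ r : ℝ, qm = (r : ℂ) ∧ -1 ≤ r ∧ r ≤ 1)

/-- The index set [±n] of the 2n tensor factors of K_n. -/
abbrev SIdx (n : ℕ) := {i : ℤ // i ≠ 0 ∧ |i| ≤ (n : ℤ)}

instance (n : ℕ) : Fintype (SIdx n) :=
  Fintype.subtype ((Finset.Icc (-(n : ℤ)) (n : ℤ)).erase 0)
    (by intro x; simp [Finset.mem_erase, Finset.mem_Icc, abs_le])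

/-- H: the complexification of the real Hilbert space with orthonormal basis α. -/
abbrev Hsp (α : Type*) := α →₀ ℂ

/-- K_n = H^{⊗2n}, with basis indexed by functions [±n] → α. -/
abbrev Ksp (α : Type*) (n : ℕ) := (SIdx n → α) →₀ ℂ

/-- The inner product of H (antilinear on the left). -/
def innerH {α : Type*} (x y : Hsp α) : ℂ :=
  y.sum fun a c => (starRingEnd ℂ) (x a) * c

/-- The free inner product ⟨·,·⟩₀,₀ on K_n (antilinear on the left); on simple tensors
it is the product of the inner products of the factors. -/
def inner00 {α : Type*} {n : ℕ} (F G : Ksp α n) : ℂ :=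
  F.sum fun v c => (starRingEnd ℂ) c * G v

open Classical in
/-- The restriction of σ : Perm ℤ to [±n] (junk value 1 if σ does not preserve [±n];
elements of B(n) do preserve it). -/
def permRestrict (n : ℕ) (σ : Equiv.Perm ℤ) : Equiv.Perm (SIdx n) :=
  if h : ∀ i : ℤ, (i ≠ 0 ∧ |i| ≤ (n : ℤ)) ↔ (σ i ≠ 0 ∧ |σ i| ≤ (n : ℤ)) then
    Equiv.Perm.subtypePerm σ (fun i => (h i).symm) else 1

/-- The action of σ ∈ B(n) on K_n permuting the tensor factors:
x_{−n}⊗…⊗x_n ↦ x_{σ(−n)}⊗…⊗x_{σ(n)}. -/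
def act (α : Type*) [DecidableEq α] (n : ℕ) (σ : Equiv.Perm ℤ) :
    Ksp α n →ₗ[ℂ] Ksp α n :=
  Finsupp.lmapDomain ℂ ℂ (fun v : SIdx n → α => v ∘ (permRestrict n σ))

/-- The type-B symmetrization operator P^{(n)}_{q₊,q₋} = Σ_{σ∈B(n)} φ_{q₊,q₋}(σ)·σ. -/
def Pop (α : Type*) [DecidableEq α] (n : ℕ) (qp qm : ℂ) : Ksp α n →ₗ[ℂ] Ksp α n :=
  ∑ᶠ σ ∈ Bset n, phi qp qm σ • act α n σ

/-- The deformed (semi-)inner product ⟨ξ,η⟩_{q₊,q₋} = ⟨ξ, P^{(n)} η⟩₀,₀ on K_n. -/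
def innerQ (α : Type*) [DecidableEq α] (n : ℕ) (qp qm : ℂ) (F G : Ksp α n) : ℂ :=
  inner00 F (Pop α n qp qm G)

/-- R^{(n)}_{q₊,q₋} = id + q₋·J_n⁻ + q₊·J_n⁺. -/
def Rop (α : Type*) [DecidableEq α] (n : ℕ) (qp qm : ℂ) : Ksp α n →ₗ[ℂ] Ksp α n :=
  LinearMap.id
    + qm • act α n (Equiv.swap (-(n : ℤ)) (n : ℤ))
    + qp • ∑ j ∈ (Finset.Icc (-(n : ℤ) + 1) ((n : ℤ) - 1)).erase 0,
        act α n (Equiv.swap j (n : ℤ) * Equiv.swap (-j) (-(n : ℤ)))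

/-- The inclusion [±n] ⊆ [±(n+1)]. -/
def castIdx {n : ℕ} (i : SIdx n) : SIdx (n + 1) :=
  ⟨i.1, i.2.1, i.2.2.trans (by push_cast; omega)⟩

/-- The position −(n+1) in [±(n+1)]. -/
def negEnd (n : ℕ) : SIdx (n + 1) :=
  ⟨-((n : ℤ) + 1), by refine ⟨by omega, ?_⟩; rw [abs_le]; constructor <;> omega⟩

/-- The position n+1 in [±(n+1)]. -/
def posEnd (n : ℕ) : SIdx (n + 1) :=
  ⟨(n : ℤ) + 1, by refine ⟨by omega, ?_⟩; rw [abs_le]; constructor <;> omega⟩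

/-- Restriction of a basis index of K_{n+1} to the middle factors [±n]. -/
def downFn {α : Type*} {n : ℕ} (v : SIdx (n + 1) → α) : SIdx n → α :=
  fun i => v (castIdx i)

open Classical in
/-- Extension of a basis index of K_n by values a at position −(n+1) and b at n+1. -/
def upFn {α : Type*} {n : ℕ} (w : SIdx n → α) (a b : α) : SIdx (n + 1) → α :=
  fun i => if h : i.1 ≠ 0 ∧ |i.1| ≤ (n : ℤ) then w ⟨i.1, h⟩
           else if i.1 < 0 then a else b

/-- id ⊗ T ⊗ id: the operator T on K_n acting on the middle 2n tensor factors of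
K_{n+1}, with the identity on the factors at positions −(n+1) and n+1. -/
def embedMid (α : Type*) [DecidableEq α] (n : ℕ) (T : Ksp α n →ₗ[ℂ] Ksp α n) :
    Ksp α (n + 1) →ₗ[ℂ] Ksp α (n + 1) :=
  Finsupp.lsum ℂ fun v : SIdx (n + 1) → α =>
    LinearMap.toSpanSingleton ℂ _
      (Finsupp.mapDomain (fun w : SIdx n → α => upFn w (v (negEnd n)) (v (posEnd n)))
        (T (Finsupp.single (downFn v) 1)))

/-- The left-right creation operator b*(x⊗y) : K_n → K_{n+1}: it tensors x at the
leftmost position −(n+1) and y at the rightmost position n+1. -/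
def bstar (α : Type*) [DecidableEq α] (n : ℕ) (x y : Hsp α) :
    Ksp α n →ₗ[ℂ] Ksp α (n + 1) :=
  Finsupp.lsum ℂ fun w : SIdx n → α =>
    LinearMap.toSpanSingleton ℂ _
      (x.sum fun a xa => y.sum fun b yb => Finsupp.single (upFn w a b) (xa * yb))

/-- The free annihilation operator b(x⊗y) : K_{n+1} → K_n, the ⟨·,·⟩₀,₀-adjoint of
b*(x⊗y):  x_{−(n+1)}⊗…⊗x_{n+1} ↦ ⟨x,x_{−(n+1)}⟩⟨y,x_{n+1}⟩·x_{−n}⊗…⊗x_n. -/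
def bfree (α : Type*) [DecidableEq α] (n : ℕ) (x y : Hsp α) :
    Ksp α (n + 1) →ₗ[ℂ] Ksp α n :=
  Finsupp.lsum ℂ fun v : SIdx (n + 1) → α =>
    LinearMap.toSpanSingleton ℂ _
      (((starRingEnd ℂ) (x (v (negEnd n))) * (starRingEnd ℂ) (y (v (posEnd n)))) •
        Finsupp.single (downFn v) (1 : ℂ))



/-- The canonical embedding H_ℝ → H of the real Hilbert space into its
complexification. -/
def cplx {α : Type*} (x : α →₀ ℝ) : Hsp α :=
  x.mapRange Complex.ofReal (by simp)

/-- The simple tensor x^{⊗2n} ∈ K_n with all 2n factors equal to x. -/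
def tpow (α : Type*) [DecidableEq α] (x : Hsp α) (n : ℕ) : Ksp α n :=
  ∑ v ∈ Fintype.piFinset (fun _ : SIdx n => x.support),
    Finsupp.single v (∏ i : SIdx n, x (v i))

open scoped ComplexOrder in
/-! ### Auxiliary lemmas -/

section Aux

lemma Equiv.Perm.apply_inv_self {X : Type*} (f : Equiv.Perm X) (x : X) : f (f⁻¹ x) = x := by
  simp

open Equiv Set

/-- The orbit of `i` under `σ`. -/
def orb (σ : Equiv.Perm ℤ) (i : ℤ) : Set ℤ := {j | σ.SameCycle i j}

lemma mem_orb {σ : Equiv.Perm ℤ} {i j : ℤ} : j ∈ orb σ i ↔ σ.SameCycle i j := Iff.rfl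

lemma self_mem_orb (σ : Equiv.Perm ℤ) (i : ℤ) : i ∈ orb σ i := ⟨0, by simp⟩

lemma apply_mem_orb (σ : Equiv.Perm ℤ) (i : ℤ) : σ i ∈ orb σ i := ⟨1, by simp⟩

lemma orb_eq_of_sameCycle {σ : Equiv.Perm ℤ} {i i' : ℤ} (h : σ.SameCycle i i') :
    orb σ i = orb σ i' := by
  ext y
  exact ⟨fun hy => h.symm.trans hy, fun hy => h.trans hy⟩

lemma sameCycle_fixed {σ : Equiv.Perm ℤ} {b x : ℤ} (hb : σ b = b) :
    σ.SameCycle x b ↔ x = b := by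
  constructor
  · rintro ⟨k, hk⟩
    have h2 : (σ ^ k) b = b := Equiv.Perm.zpow_apply_eq_self_of_apply_eq_self hb k
    have := (Equiv.injective (σ ^ k)) (hk.trans h2.symm)
    exact this
  · rintro rfl; exact ⟨0, by simp⟩

lemma sameCycle_fixed' {σ : Equiv.Perm ℤ} {b x : ℤ} (hb : σ b = b) :
    σ.SameCycle b x ↔ x = b := by
  rw [← Equiv.Perm.sameCycle_comm, sameCycle_fixed hb]

lemma orb_fixed {σ : Equiv.Perm ℤ} {b : ℤ} (hb : σ b = b) : orb σ b = {b} := by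
  ext y; rw [mem_orb, sameCycle_fixed' hb, Set.mem_singleton_iff]

lemma mem_ntOrbits {σ : Equiv.Perm ℤ} {O : Set ℤ} :
    O ∈ ntOrbits σ ↔ ∃ i, σ i ≠ i ∧ O = orb σ i := Iff.rfl

lemma ntOrbits_moved {σ : Equiv.Perm ℤ} {O : Set ℤ} (hO : O ∈ ntOrbits σ) {x : ℤ}
    (hx : x ∈ O) : σ x ≠ x := by
  obtain ⟨i, hi, rfl⟩ := hO
  intro hfix
  exact hi ((sameCycle_fixed hfix).mp hx ▸ hfix)

lemma ntOrbits_eq_orb {σ : Equiv.Perm ℤ} {O : Set ℤ} (hO : O ∈ ntOrbits σ) {x : ℤ}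
    (hx : x ∈ O) : O = orb σ x := by
  obtain ⟨i, hi, rfl⟩ := hO
  exact orb_eq_of_sameCycle hx

section BsetLemmas

variable {n : ℕ} {σ : Equiv.Perm ℤ}

lemma Bset_zero (h : σ ∈ Bset n) : σ 0 = 0 := by
  have := h.1 0
  rw [neg_zero] at this
  omega

lemma Bset_fix_abs (h : σ ∈ Bset n) {i : ℤ} (hi : (n : ℤ) < |i|) : σ i = i := h.2 i hi

lemma Bset_moved (h : σ ∈ Bset n) {i : ℤ} (hi : σ i ≠ i) : i ≠ 0 ∧ |i| ≤ (n : ℤ) := by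
  constructor
  · rintro rfl; exact hi (Bset_zero h)
  · by_contra hc; exact hi (h.2 i (by omega))

lemma Bset_abs_le (h : σ ∈ Bset n) {i : ℤ} (hi : |i| ≤ (n : ℤ)) : |σ i| ≤ (n : ℤ) := by
  by_contra hc
  push_neg at hc
  have h1 : σ (σ i) = σ i := h.2 _ hc
  have h2 : σ i = i := Equiv.injective σ h1
  rw [h2] at hc
  omega

lemma Bset_cond (h : σ ∈ Bset n) (i : ℤ) :
    (i ≠ 0 ∧ |i| ≤ (n : ℤ)) ↔ (σ i ≠ 0 ∧ |σ i| ≤ (n : ℤ)) := by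
  constructor
  · rintro ⟨h0, hle⟩
    refine ⟨fun hc => h0 (Equiv.injective σ (hc.trans (Bset_zero h).symm)), Bset_abs_le h hle⟩
  · rintro ⟨h0, hle⟩
    constructor
    · rintro rfl; exact h0 (Bset_zero h)
    · by_contra hc
      push_neg at hc
      rw [h.2 i hc] at hle
      omega

lemma Bset_one : (1 : Equiv.Perm ℤ) ∈ Bset n := ⟨fun _ => rfl, fun _ _ => rfl⟩

lemma ntOrbits_subset (h : σ ∈ Bset n) {O : Set ℤ} (hO : O ∈ ntOrbits σ) :
    O ⊆ {i : ℤ | i ≠ 0 ∧ |i| ≤ (n : ℤ)} :=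
  fun x hx => Bset_moved h (ntOrbits_moved hO hx)

lemma sidx_finite (n : ℕ) : {i : ℤ | i ≠ 0 ∧ |i| ≤ (n : ℤ)}.Finite := by
  apply (Set.finite_Icc (-(n : ℤ)) (n : ℤ)).subset
  intro x hx
  simp only [Set.mem_Icc]
  have h2 := abs_le.mp hx.2
  omega

lemma orbit_finite (h : σ ∈ Bset n) {O : Set ℤ} (hO : O ∈ ntOrbits σ) : O.Finite :=
  (sidx_finite n).subset (ntOrbits_subset h hO)

lemma ntOrbits_finite (h : σ ∈ Bset n) : (ntOrbits σ).Finite := by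
  apply (sidx_finite n).finite_subsets.subset
  intro O hO
  exact ntOrbits_subset h hO

lemma negOrbits_finite (h : σ ∈ Bset n) : (negOrbits σ).Finite :=
  (ntOrbits_finite h).subset fun O hO => hO.1

lemma posOrbits_finite (h : σ ∈ Bset n) : (posOrbits σ).Finite :=
  (ntOrbits_finite h).subset fun O hO => hO.1

end BsetLemmas

lemma mem_negSet {S : Set ℤ} {x : ℤ} : x ∈ negSet S ↔ -x ∈ S := by
  constructor
  · rintro ⟨y, hy, rfl⟩; simpa using hy
  · intro hx; exact ⟨-x, hx, by ring⟩

lemma negSet_negSet (S : Set ℤ) : negSet (negSet S) = S := by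
  ext x; rw [mem_negSet, mem_negSet, neg_neg]

lemma zpow_neg_comm {σ : Equiv.Perm ℤ} (h : ∀ i, σ (-i) = -σ i) (k : ℤ) (i : ℤ) :
    (σ ^ k) (-i) = -(σ ^ k) i := by
  have hinv : ∀ j : ℤ, σ⁻¹ (-j) = -σ⁻¹ j := by
    intro j
    apply Equiv.injective σ
    rw [Equiv.Perm.apply_inv_self, h, Equiv.Perm.apply_inv_self]
  induction k using Int.induction_on generalizing i with
  | zero => simp
  | succ k ih =>
      simp only [zpow_add_one, Equiv.Perm.mul_apply]
      rw [h, ih]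
  | pred k ih =>
      simp only [zpow_sub_one, Equiv.Perm.mul_apply]
      rw [hinv, ih]

lemma sameCycle_neg {σ : Equiv.Perm ℤ} (h : ∀ i, σ (-i) = -σ i) {i j : ℤ} :
    σ.SameCycle (-i) (-j) ↔ σ.SameCycle i j := by
  constructor
  · rintro ⟨k, hk⟩
    exact ⟨k, by rw [zpow_neg_comm h] at hk; omega⟩
  · rintro ⟨k, hk⟩
    exact ⟨k, by rw [zpow_neg_comm h, hk]⟩

lemma negSet_orb {σ : Equiv.Perm ℤ} (h : ∀ i, σ (-i) = -σ i) (i : ℤ) :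
    negSet (orb σ i) = orb σ (-i) := by
  ext y
  rw [mem_negSet, mem_orb, mem_orb]
  constructor
  · intro hy
    have := (sameCycle_neg h).mpr hy
    simpa using this
  · intro hy
    have := (sameCycle_neg h).mpr hy
    simpa using this

lemma negSet_mem_ntOrbits {σ : Equiv.Perm ℤ} (h : ∀ i, σ (-i) = -σ i) {O : Set ℤ}
    (hO : O ∈ ntOrbits σ) : negSet O ∈ ntOrbits σ := by
  obtain ⟨i, hi, rfl⟩ := hO
  refine ⟨-i, ?_, (negSet_orb h i).symm ▸ rfl⟩
  rw [h]
  intro hc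
  exact hi (by omega)

/-- Induction principle for `SameCycle`. -/
lemma sameCycle_ind {X : Type*} {f : Equiv.Perm X} (E : X → X → Prop)
    (hrefl : ∀ x, E x x) (hsymm : ∀ {x y}, E x y → E y x)
    (htrans : ∀ {x y z}, E x y → E y z → E x z)
    (hstep : ∀ x, E x (f x)) {x y : X} (h : f.SameCycle x y) : E x y := by
  obtain ⟨k, hk⟩ := h
  have key : ∀ (m : ℕ) (z : X), E z ((f ^ m) z) := by
    intro m
    induction m with
    | zero => intro z; simpa using hrefl z
    | succ m ih =>
        intro z
        have h1 : (f ^ (m + 1)) z = f ((f ^ m) z) := by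
          rw [pow_succ']; rfl
        rw [h1]
        exact htrans (ih z) (hstep _)
  rcases k with m | m
  · rw [Int.ofNat_eq_coe, zpow_natCast] at hk
    rw [← hk]; exact key m x
  · have h1 : (f ^ (m + 1)) y = x := by
      rw [zpow_negSucc] at hk
      rw [← hk, Equiv.Perm.apply_inv_self]
    have := key (m + 1) y
    rw [h1] at this
    exact hsymm this

/-- The key cycle-insertion lemma: inserting `b` right after `a` in the cycle
structure of `π`. -/
lemma ins_sameCycle {π : Equiv.Perm ℤ} {a b : ℤ} (hb : π b = b) (hab : a ≠ b) (x y : ℤ) :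
    (π * Equiv.swap a b).SameCycle x y ↔
      π.SameCycle (if x = b then a else x) (if y = b then a else y) := by
  have hif1 : (if b = b then a else b) = a := if_pos rfl
  have hif2 : ∀ z : ℤ, z ≠ b → (if z = b then a else z) = z := fun z hz => if_neg hz
  set π' := π * Equiv.swap a b with hπ'
  have hπ'b : π' b = π a := by rw [hπ', Equiv.Perm.mul_apply, Equiv.swap_apply_right]
  have hπ'a : π' a = b := by rw [hπ', Equiv.Perm.mul_apply, Equiv.swap_apply_left, hb]
  have hπ'other : ∀ z, z ≠ a → z ≠ b → π' z = π z := fun z h1 h2 => by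
    rw [hπ', Equiv.Perm.mul_apply, Equiv.swap_apply_of_ne_of_ne h1 h2]
  have hπa : π a ≠ b := fun hc => hab (Equiv.injective π (hc.trans hb.symm))
  constructor
  · intro h
    refine sameCycle_ind
      (fun u v => π.SameCycle (if u = b then a else u) (if v = b then a else v))
      (fun u => Equiv.Perm.SameCycle.refl _ _) (fun h => h.symm) (fun h1 h2 => h1.trans h2) ?_ h
    intro u
    rcases eq_or_ne u b with hub | hub
    · rw [hub, hπ'b, hif1, hif2 _ hπa]
      exact ⟨1, by simp⟩
    · rcases eq_or_ne u a with hua | hua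
      · rw [hua, hπ'a, hif1, hif2 a hab]
      · have h2 : π u ≠ b := fun hc => hub (Equiv.injective π (hc.trans hb.symm))
        rw [hπ'other u hua hub, hif2 u hub, hif2 _ h2]
        exact ⟨1, by simp⟩
  · intro h
    have hstep : ∀ u v, π.SameCycle u v → π'.SameCycle u v := by
      intro u v huv
      refine sameCycle_ind (fun u v => π'.SameCycle u v)
        (fun u => Equiv.Perm.SameCycle.refl _ _) (fun h => h.symm)
        (fun h1 h2 => h1.trans h2) ?_ huv
      intro w
      rcases eq_or_ne w a with hwa | hwa
      · rw [hwa]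
        have h1 : π'.SameCycle a b := ⟨1, by simpa using hπ'a⟩
        have h2 : π'.SameCycle b (π a) := ⟨1, by simpa using hπ'b⟩
        exact h1.trans h2
      · rcases eq_or_ne w b with hwb | hwb
        · rw [hwb, hb]
        · rw [← hπ'other w hwa hwb]
          exact ⟨1, by simp⟩
    have hbridge : ∀ u, π'.SameCycle u (if u = b then a else u) := by
      intro u
      rcases eq_or_ne u b with hub | hub
      · rw [hub, hif1]
        exact Equiv.Perm.SameCycle.symm ⟨1, by simpa using hπ'a⟩
      · rw [hif2 u hub]
    exact (hbridge x).trans ((hstep _ _ h).trans (hbridge y).symm)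


lemma mem_negOrbits {σ : Equiv.Perm ℤ} {O : Set ℤ} :
    O ∈ negOrbits σ ↔ O ∈ ntOrbits σ ∧ negSet O = O := Iff.rfl

lemma mem_posOrbits {σ : Equiv.Perm ℤ} {O : Set ℤ} :
    O ∈ posOrbits σ ↔ O ∈ ntOrbits σ ∧ negSet O ≠ O := Iff.rfl

lemma finsum_mem_shift {α : Type*} {s : Set α} (hs : s.Finite) (f g : α → ℕ) (a : α)
    (ha : a ∈ s) (hfa : f a = g a + 1) (hother : ∀ x ∈ s, x ≠ a → f x = g x) :
    ∑ᶠ x ∈ s, f x = (∑ᶠ x ∈ s, g x) + 1 := by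
  classical
  rw [finsum_mem_eq_finite_toFinset_sum f hs, finsum_mem_eq_finite_toFinset_sum g hs]
  have h1 : ∀ x ∈ hs.toFinset, f x = g x + (if x = a then 1 else 0) := by
    intro x hx
    rcases eq_or_ne x a with rfl | hxa
    · simpa using hfa
    · simp [hxa, hother x (hs.mem_toFinset.mp hx) hxa]
  rw [Finset.sum_congr rfl h1, Finset.sum_add_distrib, Finset.sum_ite_eq']
  simp [ha]

lemma finsum_mem_shift2 {α : Type*} {s : Set α} (hs : s.Finite) (f g : α → ℕ) (a b : α)
    (ha : a ∈ s) (hb : b ∈ s) (hab : a ≠ b) (hfa : f a = g a + 1) (hfb : f b = g b + 1)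
    (hother : ∀ x ∈ s, x ≠ a → x ≠ b → f x = g x) :
    ∑ᶠ x ∈ s, f x = (∑ᶠ x ∈ s, g x) + 2 := by
  classical
  rw [finsum_mem_eq_finite_toFinset_sum f hs, finsum_mem_eq_finite_toFinset_sum g hs]
  have h1 : ∀ x ∈ hs.toFinset, f x = g x + ((if x = a then 1 else 0) + (if x = b then 1 else 0)) := by
    intro x hx
    rcases eq_or_ne x a with rfl | hxa
    · simp [hab, hfa]
    · rcases eq_or_ne x b with rfl | hxb
      · simp [hxa, hfb]
      · simp [hxa, hxb, hother x (hs.mem_toFinset.mp hx) hxa hxb]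
  rw [Finset.sum_congr rfl h1, Finset.sum_add_distrib, Finset.sum_add_distrib,
    Finset.sum_ite_eq', Finset.sum_ite_eq']
  simp [ha, hb]

lemma ntOrbits_one : ntOrbits (1 : Equiv.Perm ℤ) = ∅ := by
  ext O
  simp only [mem_ntOrbits, Set.mem_empty_iff_false, iff_false, not_exists]
  rintro i ⟨hi, -⟩
  exact hi rfl

lemma phi_one (qp qm : ℂ) : phi qp qm 1 = 1 := by
  have h1 : negOrbits (1 : Equiv.Perm ℤ) = ∅ := by
    ext O; rw [mem_negOrbits, ntOrbits_one]; simp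
  have h2 : posOrbits (1 : Equiv.Perm ℤ) = ∅ := by
    ext O; rw [mem_posOrbits, ntOrbits_one]; simp
  rw [phi, expPlus, negCount, h1, h2]
  simp

section SwapNeg

variable {n : ℕ} {σ' : Equiv.Perm ℤ}

lemma phi_mul_swap_neg (qp qm : ℂ) (h : σ' ∈ Bset n) :
    phi qp qm (σ' * Equiv.swap ((n : ℤ) + 1) (-((n : ℤ) + 1))) = qm * phi qp qm σ' := by
  set m : ℤ := (n : ℤ) + 1 with hm
  have hm0 : 0 < m := by omega
  have hmne : m ≠ -m := by omega
  have habs : (n : ℤ) < |m| := by rw [abs_of_pos hm0]; omega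
  have habs' : (n : ℤ) < |(-m)| := by rw [abs_neg, abs_of_pos hm0]; omega
  have hfixm : σ' m = m := h.2 m habs
  have hfixnegm : σ' (-m) = -m := h.2 (-m) habs'
  set σ := σ' * Equiv.swap m (-m) with hσ
  have key : ∀ x y : ℤ, σ.SameCycle x y ↔
      σ'.SameCycle (if x = -m then m else x) (if y = -m then m else y) :=
    fun x y => ins_sameCycle hfixnegm hmne x y
  have hσm : σ m = -m := by
    rw [hσ, Equiv.Perm.mul_apply, Equiv.swap_apply_left, hfixnegm]
  have hσi : ∀ i : ℤ, i ≠ m → i ≠ -m → σ i = σ' i := fun i h1 h2 => by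
    rw [hσ, Equiv.Perm.mul_apply, Equiv.swap_apply_of_ne_of_ne h1 h2]
  have horbm : orb σ m = {m, -m} := by
    ext y
    rw [mem_orb, key, if_neg hmne]
    rcases eq_or_ne y (-m) with rfl | hy
    · rw [if_pos rfl]
      exact iff_of_true (Equiv.Perm.SameCycle.refl _ _) (Or.inr rfl)
    · rw [if_neg hy, sameCycle_fixed' hfixm]
      simp only [Set.mem_insert_iff, Set.mem_singleton_iff]
      exact ⟨Or.inl, fun h1 => h1.resolve_right hy⟩
  have horb : ∀ i : ℤ, i ≠ m → i ≠ -m → orb σ i = orb σ' i := by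
    intro i him hinm
    ext y
    rw [mem_orb, mem_orb, key, if_neg hinm]
    rcases eq_or_ne y (-m) with rfl | hy
    · rw [if_pos rfl, sameCycle_fixed hfixm, sameCycle_fixed hfixnegm]
      exact iff_of_false him hinm
    · rw [if_neg hy]
  have hnt : ntOrbits σ = insert ({m, -m} : Set ℤ) (ntOrbits σ') := by
    ext O
    simp only [mem_ntOrbits, Set.mem_insert_iff]
    constructor
    · rintro ⟨i, hi, rfl⟩
      rcases eq_or_ne i m with rfl | him
      · left; exact horbm
      rcases eq_or_ne i (-m) with rfl | hinm
      · left
        have hcyc : σ.SameCycle m (-m) := ⟨1, by simpa using hσm⟩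
        rw [show orb σ (-m) = orb σ m from (orb_eq_of_sameCycle hcyc).symm]
        exact horbm
      · right
        refine ⟨i, ?_, horb i him hinm⟩
        rwa [hσi i him hinm] at hi
    · rintro (rfl | ⟨i, hi, rfl⟩)
      · exact ⟨m, by rw [hσm]; omega, horbm.symm⟩
      · have him : i ≠ m := fun hc => hi (by rw [hc, hfixm])
        have hinm : i ≠ -m := fun hc => hi (by rw [hc, hfixnegm])
        exact ⟨i, by rw [hσi i him hinm]; exact hi, (horb i him hinm).symm⟩
  have hnotmem : ({m, -m} : Set ℤ) ∉ ntOrbits σ' := fun hc =>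
    ntOrbits_moved hc (Set.mem_insert m _) hfixm
  have hnegpair : negSet ({m, -m} : Set ℤ) = {m, -m} := by
    ext x
    rw [mem_negSet]
    simp only [Set.mem_insert_iff, Set.mem_singleton_iff]
    omega
  have hneg : negOrbits σ = insert ({m, -m} : Set ℤ) (negOrbits σ') := by
    ext O
    rw [mem_negOrbits, hnt, Set.mem_insert_iff, Set.mem_insert_iff, mem_negOrbits]
    constructor
    · rintro ⟨(rfl | hO), hns⟩
      · exact Or.inl rfl
      · exact Or.inr ⟨hO, hns⟩
    · rintro (rfl | ⟨hO, hns⟩)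
      · exact ⟨Or.inl rfl, hnegpair⟩
      · exact ⟨Or.inr hO, hns⟩
  have hpos : posOrbits σ = posOrbits σ' := by
    ext O
    rw [mem_posOrbits, hnt, Set.mem_insert_iff, mem_posOrbits]
    constructor
    · rintro ⟨(rfl | hO), hns⟩
      · exact absurd hnegpair hns
      · exact ⟨hO, hns⟩
    · rintro ⟨hO, hns⟩
      exact ⟨Or.inr hO, hns⟩
  have hnotmem' : ({m, -m} : Set ℤ) ∉ negOrbits σ' := fun hc => hnotmem hc.1
  have hnegsum : ∑ᶠ O ∈ negOrbits σ, (O.ncard / 2 - 1) =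
      ∑ᶠ O ∈ negOrbits σ', (O.ncard / 2 - 1) := by
    rw [hneg, finsum_mem_insert' _ hnotmem' ((negOrbits_finite h).inter_of_left _),
      Set.ncard_pair hmne]
    simp
  have hexp : expPlus σ = expPlus σ' := by
    rw [expPlus, expPlus, hpos, hnegsum]
  have hcount : negCount σ = negCount σ' + 1 := by
    rw [negCount, negCount, hneg, Set.ncard_insert_of_notMem hnotmem' (negOrbits_finite h)]
  rw [phi, phi, hexp, hcount]
  ring

end SwapNeg


section Tau

/-- Extension of a set by `m` (if `j` is present) and `-m` (if `-j` is present). -/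
def gext (j m : ℤ) (O : Set ℤ) : Set ℤ :=
  O ∪ ({x | x = m ∧ j ∈ O} ∪ {x | x = -m ∧ -j ∈ O})

lemma mem_gext {j m x : ℤ} {O : Set ℤ} :
    x ∈ gext j m O ↔ x ∈ O ∨ (x = m ∧ j ∈ O) ∨ (x = -m ∧ -j ∈ O) := by
  simp [gext, Set.mem_union, Set.mem_setOf_eq]

lemma gext_of_not_mem {j m : ℤ} {O : Set ℤ} (h1 : j ∉ O) (h2 : -j ∉ O) :
    gext j m O = O := by
  ext x
  rw [mem_gext]
  simp only [h1, h2, and_false, or_false]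

lemma gext_insert1 {j m : ℤ} {O : Set ℤ} (h1 : j ∈ O) (h2 : -j ∉ O) :
    gext j m O = insert m O := by
  ext x
  rw [mem_gext, Set.mem_insert_iff]
  simp only [h1, h2, and_true, and_false, or_false]
  tauto

lemma gext_insert2 {j m : ℤ} {O : Set ℤ} (h1 : j ∈ O) (h2 : -j ∈ O) :
    gext j m O = insert m (insert (-m) O) := by
  ext x
  rw [mem_gext, Set.mem_insert_iff, Set.mem_insert_iff]
  simp only [h1, h2, and_true]
  tauto

lemma negSet_pair (a b : ℤ) : negSet ({a, b} : Set ℤ) = {-a, -b} := by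
  ext x
  rw [mem_negSet]
  simp only [Set.mem_insert_iff, Set.mem_singleton_iff]
  omega

lemma negSet_gext (j m : ℤ) (O : Set ℤ) : negSet (gext j m O) = gext j m (negSet O) := by
  ext x
  rw [mem_negSet, mem_gext, mem_gext, mem_negSet, mem_negSet, mem_negSet, neg_neg]
  constructor
  · rintro (h | ⟨h1, h2⟩ | ⟨h1, h2⟩)
    · exact Or.inl h
    · exact Or.inr (Or.inr ⟨by omega, h2⟩)
    · exact Or.inr (Or.inl ⟨by omega, h2⟩)
  · rintro (h | ⟨h1, h2⟩ | ⟨h1, h2⟩)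
    · exact Or.inl h
    · exact Or.inr (Or.inr ⟨by omega, h2⟩)
    · exact Or.inr (Or.inl ⟨by omega, h2⟩)

lemma gext_diff {j m : ℤ} {O : Set ℤ} (h1 : m ∉ O) (h2 : -m ∉ O) :
    gext j m O \ {m, -m} = O := by
  ext x
  simp only [Set.mem_diff, mem_gext, Set.mem_insert_iff, Set.mem_singleton_iff]
  constructor
  · rintro ⟨h | ⟨rfl, -⟩ | ⟨rfl, -⟩, hne⟩
    · exact h
    · exact absurd (Or.inl rfl) hne
    · exact absurd (Or.inr rfl) hne
  · intro hx
    exact ⟨Or.inl hx, by rintro (rfl | rfl) <;> [exact h1 hx; exact h2 hx]⟩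

/-- `rfun j m` collapses `±m` onto `±j`. -/
def rfun (j m z : ℤ) : ℤ := if z = m then j else if z = -m then -j else z

lemma rfun_m {j m : ℤ} : rfun j m m = j := if_pos rfl

lemma rfun_negm {j m : ℤ} (h : -m ≠ m) : rfun j m (-m) = -j := by
  rw [rfun, if_neg h, if_pos rfl]

lemma rfun_other {j m z : ℤ} (h1 : z ≠ m) (h2 : z ≠ -m) : rfun j m z = z := by
  rw [rfun, if_neg h1, if_neg h2]

lemma orb_nontrivial {σ : Equiv.Perm ℤ} {i k : ℤ} (hi : σ i ≠ i) (hk : orb σ i = {k}) :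
    False := by
  have h1 : i ∈ ({k} : Set ℤ) := hk ▸ self_mem_orb σ i
  have h2 : σ i ∈ ({k} : Set ℤ) := hk ▸ apply_mem_orb σ i
  rw [Set.mem_singleton_iff] at h1 h2
  exact hi (h2.trans h1.symm)

lemma gext_insert1' {j m : ℤ} {O : Set ℤ} (h1 : j ∉ O) (h2 : -j ∈ O) :
    gext j m O = insert (-m) O := by
  ext x
  rw [mem_gext, Set.mem_insert_iff]
  simp only [h1, h2, and_true, and_false, false_or]
  tauto

lemma phi_mul_tau (qp qm : ℂ) {n : ℕ} {σ' : Equiv.Perm ℤ} (h : σ' ∈ Bset n) {j : ℤ}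
    (hj0 : j ≠ 0) (hjn : |j| ≤ (n : ℤ)) :
    phi qp qm (σ' * (Equiv.swap j ((n : ℤ) + 1) * Equiv.swap (-j) (-((n : ℤ) + 1)))) =
      qp * phi qp qm σ' := by
  set m : ℤ := (n : ℤ) + 1 with hm
  have hjabs := abs_le.mp hjn
  have hjm : j ≠ m := by omega
  have hjnm : j ≠ -m := by omega
  have hnjm : -j ≠ m := by omega
  have hnjnm : -j ≠ -m := by omega
  have hmnm : m ≠ -m := by omega
  have hnmm : -m ≠ m := by omega
  have hjnj : j ≠ -j := by omega
  have hnjj : -j ≠ j := by omega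
  have hfixm : σ' m = m := h.2 m (by rw [abs_of_pos (by omega)]; omega)
  have hfixnegm : σ' (-m) = -m := h.2 (-m) (by rw [abs_neg, abs_of_pos (by omega)]; omega)
  set σ := σ' * (Equiv.swap j m * Equiv.swap (-j) (-m)) with hσdef
  have hσ_j : σ j = m := by
    rw [hσdef, Equiv.Perm.mul_apply, Equiv.Perm.mul_apply,
      Equiv.swap_apply_of_ne_of_ne hjnj hjnm, Equiv.swap_apply_left, hfixm]
  have hσ_negj : σ (-j) = -m := by
    rw [hσdef, Equiv.Perm.mul_apply, Equiv.Perm.mul_apply, Equiv.swap_apply_left,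
      Equiv.swap_apply_of_ne_of_ne (Ne.symm hjnm) hnmm, hfixnegm]
  have hσ_other : ∀ z : ℤ, z ≠ j → z ≠ -j → z ≠ m → z ≠ -m → σ z = σ' z := by
    intro z h1 h2 h3 h4
    rw [hσdef, Equiv.Perm.mul_apply, Equiv.Perm.mul_apply,
      Equiv.swap_apply_of_ne_of_ne h2 h4, Equiv.swap_apply_of_ne_of_ne h1 h3]
  have key : ∀ x y : ℤ, σ.SameCycle x y ↔ σ'.SameCycle (rfun j m x) (rfun j m y) := by
    intro x y
    have hassoc : σ = (σ' * Equiv.swap j m) * Equiv.swap (-j) (-m) := by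
      rw [hσdef, mul_assoc]
    have hb1 : (σ' * Equiv.swap j m) (-m) = -m := by
      rw [Equiv.Perm.mul_apply, Equiv.swap_apply_of_ne_of_ne (Ne.symm hjnm) hnmm, hfixnegm]
    rw [hassoc, ins_sameCycle hb1 hnjnm, ins_sameCycle hfixm hjm]
    have hcomp : ∀ z : ℤ,
        (if (if z = -m then -j else z) = m then j else if z = -m then -j else z) =
          rfun j m z := by
      intro z
      rcases eq_or_ne z (-m) with rfl | h1
      · rw [if_pos rfl, if_neg hnjm, rfun_negm hnmm]
      · rw [if_neg h1]
        rcases eq_or_ne z m with rfl | h2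
        · rw [if_pos rfl, rfun_m]
        · rw [if_neg h2, rfun_other h2 h1]
    rw [hcomp x, hcomp y]
  have hRnotm : ∀ z : ℤ, rfun j m z ≠ m ∧ rfun j m z ≠ -m := by
    intro z
    rcases eq_or_ne z m with rfl | h1
    · rw [rfun_m]; exact ⟨hjm, hjnm⟩
    · rcases eq_or_ne z (-m) with rfl | h2
      · rw [rfun_negm hnmm]; exact ⟨hnjm, hnjnm⟩
      · rw [rfun_other h1 h2]; exact ⟨h1, h2⟩
  have horb : ∀ i : ℤ, orb σ i = gext j m (orb σ' (rfun j m i)) := by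
    intro i
    obtain ⟨hRi1, hRi2⟩ := hRnotm i
    ext y
    rw [mem_orb, key i y, mem_gext]
    constructor
    · intro hy
      rcases eq_or_ne y m with rfl | hym
      · rw [rfun_m] at hy
        exact Or.inr (Or.inl ⟨rfl, hy⟩)
      rcases eq_or_ne y (-m) with rfl | hynm
      · rw [rfun_negm hnmm] at hy
        exact Or.inr (Or.inr ⟨rfl, hy⟩)
      · rw [rfun_other hym hynm] at hy
        exact Or.inl hy
    · rintro (hy | ⟨rfl, hy⟩ | ⟨rfl, hy⟩)
      · have hym : y ≠ m := fun hc => hRi1 ((sameCycle_fixed hfixm).mp (hc ▸ hy))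
        have hynm : y ≠ -m := fun hc => hRi2 ((sameCycle_fixed hfixnegm).mp (hc ▸ hy))
        rw [rfun_other hym hynm]
        exact hy
      · rw [rfun_m]; exact hy
      · rw [rfun_negm hnmm]; exact hy
  have hsub : ∀ O ∈ ntOrbits σ', m ∉ O ∧ -m ∉ O := by
    intro O hO
    constructor
    · intro hc
      have := (ntOrbits_subset h hO hc).2
      rw [abs_of_pos (by omega : (0:ℤ) < m)] at this
      omega
    · intro hc
      have := (ntOrbits_subset h hO hc).2
      rw [abs_neg, abs_of_pos (by omega : (0:ℤ) < m)] at this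
      omega
  have hinj : Set.InjOn (gext j m) (ntOrbits σ') := by
    intro O1 h1 O2 h2 heq
    obtain ⟨ha1, ha2⟩ := hsub O1 h1
    obtain ⟨hb1, hb2⟩ := hsub O2 h2
    rw [← gext_diff (j := j) ha1 ha2, ← gext_diff (j := j) hb1 hb2, heq]
  by_cases hj : σ' j = j
  · -- case (a) : j is a fixed point of σ'
    have hjneg : σ' (-j) = -j := by rw [h.1 j, hj]
    have hjnotin : ∀ O ∈ ntOrbits σ', j ∉ O ∧ -j ∉ O := by
      intro O hO
      exact ⟨fun hc => ntOrbits_moved hO hc hj, fun hc => ntOrbits_moved hO hc hjneg⟩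
    have hgjm : gext j m ({j} : Set ℤ) = ({j, m} : Set ℤ) := by
      rw [gext_insert1 (j := j) (m := m) (O := {j}) (Set.mem_singleton j) hnjj]
      ext x
      simp only [Set.mem_insert_iff, Set.mem_singleton_iff]
      tauto
    have hgnjm : gext j m ({-j} : Set ℤ) = ({-j, -m} : Set ℤ) := by
      rw [gext_insert1' (j := j) (m := m) (O := {-j}) hjnj (Set.mem_singleton (-j))]
      ext x
      simp only [Set.mem_insert_iff, Set.mem_singleton_iff]
      tauto
    have horbj : orb σ j = ({j, m} : Set ℤ) := by
      rw [horb j, rfun_other hjm hjnm, orb_fixed hj, hgjm]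
    have horbnegj : orb σ (-j) = ({-j, -m} : Set ℤ) := by
      rw [horb (-j), rfun_other hnjm hnjnm, orb_fixed hjneg, hgnjm]
    have hnta : ntOrbits σ =
        insert ({j, m} : Set ℤ) (insert ({-j, -m} : Set ℤ) (ntOrbits σ')) := by
      ext O
      simp only [mem_ntOrbits, Set.mem_insert_iff]
      constructor
      · rintro ⟨i, hi, rfl⟩
        by_cases hk : σ' (rfun j m i) = rfun j m i
        · rcases eq_or_ne (rfun j m i) j with hkj | hkj
          · left
            rw [horb i, hkj, orb_fixed hj, hgjm]
          rcases eq_or_ne (rfun j m i) (-j) with hknj | hknj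
          · right; left
            rw [horb i, hknj, orb_fixed hjneg, hgnjm]
          · exfalso
            refine orb_nontrivial (k := rfun j m i) hi ?_
            rw [horb i, orb_fixed hk, gext_of_not_mem
              (fun hc => hkj (Set.mem_singleton_iff.mp hc).symm)
              (fun hc => hknj (Set.mem_singleton_iff.mp hc).symm)]
        · right; right
          have hOmem : orb σ' (rfun j m i) ∈ ntOrbits σ' := ⟨rfun j m i, hk, rfl⟩
          refine ⟨rfun j m i, hk, ?_⟩
          rw [horb i, gext_of_not_mem (hjnotin _ hOmem).1 (hjnotin _ hOmem).2]
      · rintro (rfl | rfl | ⟨i, hi, rfl⟩)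
        · exact ⟨j, by rw [hσ_j]; exact Ne.symm hjm, horbj.symm⟩
        · exact ⟨-j, by rw [hσ_negj]; exact Ne.symm hnjnm, horbnegj.symm⟩
        · have hOmem : orb σ' i ∈ ntOrbits σ' := ⟨i, hi, rfl⟩
          have him : i ≠ m := fun hc => hi (by rw [hc, hfixm])
          have hinm : i ≠ -m := fun hc => hi (by rw [hc, hfixnegm])
          have hij : i ≠ j := fun hc => hi (by rw [hc, hj])
          have hinj' : i ≠ -j := fun hc => hi (by rw [hc, hjneg])
          refine ⟨i, by rw [hσ_other i hij hinj' him hinm]; exact hi, ?_⟩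
          rw [horb i, rfun_other him hinm,
            gext_of_not_mem (hjnotin _ hOmem).1 (hjnotin _ hOmem).2]
      -- end hnta
    have hpairne : ({j, m} : Set ℤ) ≠ ({-j, -m} : Set ℤ) := by
      intro heq
      have hmem : m ∈ ({-j, -m} : Set ℤ) := heq ▸ (Set.mem_insert_iff.mpr (Or.inr rfl))
      simp only [Set.mem_insert_iff, Set.mem_singleton_iff] at hmem
      omega
    have hjm_nt : ({j, m} : Set ℤ) ∉ ntOrbits σ' :=
      fun hc => (hsub _ hc).1 (Set.mem_insert_iff.mpr (Or.inr rfl))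
    have hnjm_nt : ({-j, -m} : Set ℤ) ∉ ntOrbits σ' :=
      fun hc => (hsub _ hc).2 (Set.mem_insert_iff.mpr (Or.inr rfl))
    have hnegO : negOrbits σ = negOrbits σ' := by
      ext O
      rw [mem_negOrbits, hnta, Set.mem_insert_iff, Set.mem_insert_iff, mem_negOrbits]
      constructor
      · rintro ⟨(rfl | rfl | hO), hns⟩
        · rw [negSet_pair] at hns
          exact absurd hns.symm hpairne
        · rw [negSet_pair, neg_neg, neg_neg] at hns
          exact absurd hns hpairne
        · exact ⟨hO, hns⟩
      · rintro ⟨hO, hns⟩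
        exact ⟨Or.inr (Or.inr hO), hns⟩
    have hposO : posOrbits σ =
        insert ({j, m} : Set ℤ) (insert ({-j, -m} : Set ℤ) (posOrbits σ')) := by
      ext O
      rw [mem_posOrbits, hnta, Set.mem_insert_iff, Set.mem_insert_iff,
        Set.mem_insert_iff, Set.mem_insert_iff, mem_posOrbits]
      constructor
      · rintro ⟨(rfl | rfl | hO), hns⟩
        · exact Or.inl rfl
        · exact Or.inr (Or.inl rfl)
        · exact Or.inr (Or.inr ⟨hO, hns⟩)
      · rintro (rfl | rfl | ⟨hO, hns⟩)
        · refine ⟨Or.inl rfl, ?_⟩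
          rw [negSet_pair]
          exact fun hc => hpairne hc.symm
        · refine ⟨Or.inr (Or.inl rfl), ?_⟩
          rw [negSet_pair, neg_neg, neg_neg]
          exact hpairne
        · exact ⟨Or.inr (Or.inr hO), hns⟩
    have notmem2 : ({-j, -m} : Set ℤ) ∉ posOrbits σ' := fun hc => hnjm_nt hc.1
    have notmem1 : ({j, m} : Set ℤ) ∉ insert ({-j, -m} : Set ℤ) (posOrbits σ') := by
      intro hc
      rcases Set.mem_insert_iff.mp hc with he | hc'
      · exact hpairne he
      · exact hjm_nt hc'.1
    have e1 : ∑ᶠ O ∈ posOrbits σ, (O.ncard - 1) =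
        (∑ᶠ O ∈ posOrbits σ', (O.ncard - 1)) + 2 := by
      rw [hposO, finsum_mem_insert' _ notmem1 (((posOrbits_finite h).insert _).inter_of_left _),
        finsum_mem_insert' _ notmem2 ((posOrbits_finite h).inter_of_left _),
        Set.ncard_pair hjm, Set.ncard_pair hnjnm]
      omega
    have hexp : expPlus σ = expPlus σ' + 1 := by
      rw [expPlus, expPlus, e1, hnegO]
      omega
    have hcount : negCount σ = negCount σ' := by rw [negCount, negCount, hnegO]
    rw [phi, phi, hexp, hcount]
    ring
  · -- cases (b),(c) : j is moved by σ'
    have hnj : σ' (-j) ≠ -j := by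
      intro hc
      rw [h.1 j] at hc
      exact hj (by omega)
    have hO0 : orb σ' j ∈ ntOrbits σ' := ⟨j, hj, rfl⟩
    have hjO0 : j ∈ orb σ' j := self_mem_orb σ' j
    have hntb : ntOrbits σ = gext j m '' ntOrbits σ' := by
      ext O
      simp only [mem_ntOrbits, Set.mem_image]
      constructor
      · rintro ⟨i, hi, rfl⟩
        by_cases hk : σ' (rfun j m i) = rfun j m i
        · exfalso
          rcases eq_or_ne (rfun j m i) j with hkj | hkj
          · exact hj (hkj ▸ hk)
          rcases eq_or_ne (rfun j m i) (-j) with hknj | hknj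
          · exact hnj (hknj ▸ hk)
          · refine orb_nontrivial (k := rfun j m i) hi ?_
            rw [horb i, orb_fixed hk, gext_of_not_mem
              (fun hc => hkj (Set.mem_singleton_iff.mp hc).symm)
              (fun hc => hknj (Set.mem_singleton_iff.mp hc).symm)]
        · exact ⟨orb σ' (rfun j m i), ⟨rfun j m i, hk, rfl⟩, (horb i).symm⟩
      · rintro ⟨O', ⟨i, hi, rfl⟩, rfl⟩
        have him : i ≠ m := fun hc => hi (by rw [hc, hfixm])
        have hinm : i ≠ -m := fun hc => hi (by rw [hc, hfixnegm])
        have hR : rfun j m i = i := rfun_other him hinm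
        refine ⟨i, ?_, by rw [horb i, hR]⟩
        rcases eq_or_ne i j with rfl | hij
        · rw [hσ_j]; exact Ne.symm hjm
        rcases eq_or_ne i (-j) with rfl | hinj'
        · rw [hσ_negj]; exact Ne.symm hnjnm
        · rw [hσ_other i hij hinj' him hinm]; exact hi
    have himageneg : negOrbits σ = gext j m '' negOrbits σ' := by
      ext O
      rw [mem_negOrbits, hntb]
      constructor
      · rintro ⟨⟨O', hO', rfl⟩, hns⟩
        refine ⟨O', ⟨hO', ?_⟩, rfl⟩
        have h1 : gext j m (negSet O') = gext j m O' := by rw [← negSet_gext, hns]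
        exact hinj (negSet_mem_ntOrbits h.1 hO') hO' h1
      · rintro ⟨O', ⟨hO', hns⟩, rfl⟩
        exact ⟨⟨O', hO', rfl⟩, by rw [negSet_gext, hns]⟩
    have himagepos : posOrbits σ = gext j m '' posOrbits σ' := by
      ext O
      rw [mem_posOrbits, hntb]
      constructor
      · rintro ⟨⟨O', hO', rfl⟩, hns⟩
        refine ⟨O', ⟨hO', ?_⟩, rfl⟩
        intro hc
        exact hns (by rw [negSet_gext, hc])
      · rintro ⟨O', ⟨hO', hns⟩, rfl⟩
        refine ⟨⟨O', hO', rfl⟩, ?_⟩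
        intro hc
        rw [negSet_gext] at hc
        exact hns (hinj (negSet_mem_ntOrbits h.1 hO') hO' hc)
    have hcount : negCount σ = negCount σ' := by
      rw [negCount, negCount, himageneg,
        Set.ncard_image_of_injOn (hinj.mono (fun O hO => hO.1))]
    have hmO0 := hsub _ hO0
    by_cases hnegc : negSet (orb σ' j) = orb σ' j
    · -- case (c) : the orbit of j is self-negative
      have hnjO0 : -j ∈ orb σ' j := by
        rw [← hnegc]
        exact mem_negSet.mpr (by rw [neg_neg]; exact self_mem_orb σ' j)
      have hposnotin : ∀ O ∈ posOrbits σ', j ∉ O ∧ -j ∉ O := by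
        intro O hO
        constructor
        · intro hc
          exact hO.2 ((ntOrbits_eq_orb hO.1 hc) ▸ hnegc)
        · intro hc
          have h1 : O = orb σ' (-j) := ntOrbits_eq_orb hO.1 hc
          rw [← negSet_orb h.1 j, hnegc] at h1
          exact hO.2 (h1 ▸ hnegc)
      have e1 : ∑ᶠ O ∈ posOrbits σ, (O.ncard - 1) =
          ∑ᶠ O ∈ posOrbits σ', (O.ncard - 1) := by
        rw [himagepos, finsum_mem_image (hinj.mono (fun O hO => hO.1))]
        exact finsum_mem_congr rfl (fun O hO => by
          rw [gext_of_not_mem (hposnotin O hO).1 (hposnotin O hO).2])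
      have hcard : (gext j m (orb σ' j)).ncard = (orb σ' j).ncard + 2 := by
        rw [gext_insert2 hjO0 hnjO0,
          Set.ncard_insert_of_notMem (fun hc => by
            rcases Set.mem_insert_iff.mp hc with he | hc'
            · exact hmnm he
            · exact hmO0.1 hc') (((orbit_finite h hO0).insert _)),
          Set.ncard_insert_of_notMem hmO0.2 (orbit_finite h hO0)]
      have hbig : 1 < (orb σ' j).ncard :=
        (Set.one_lt_ncard (orbit_finite h hO0)).mpr ⟨-j, hnjO0, j, hjO0, hnjj⟩
      have e2 : ∑ᶠ O ∈ negOrbits σ, (O.ncard / 2 - 1) =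
          (∑ᶠ O ∈ negOrbits σ', (O.ncard / 2 - 1)) + 1 := by
        rw [himageneg, finsum_mem_image (hinj.mono (fun O hO => hO.1))]
        refine finsum_mem_shift (negOrbits_finite h) _ _ (orb σ' j) ⟨hO0, hnegc⟩ ?_ ?_
        · rw [hcard]; omega
        · intro O hO hOne
          have h1 : j ∉ O := fun hc => hOne (ntOrbits_eq_orb hO.1 hc)
          have h2 : -j ∉ O := by
            intro hc
            have h3 : O = orb σ' (-j) := ntOrbits_eq_orb hO.1 hc
            rw [← negSet_orb h.1 j, hnegc] at h3
            exact hOne h3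
          rw [gext_of_not_mem h1 h2]
      have hexp : expPlus σ = expPlus σ' + 1 := by
        rw [expPlus, expPlus, e1, e2]
        omega
      rw [phi, phi, hexp, hcount]
      ring
    · -- case (b) : the orbit of j is not self-negative
      have hO1 : orb σ' (-j) ∈ ntOrbits σ' := ⟨-j, hnj, rfl⟩
      have hO1eq : negSet (orb σ' j) = orb σ' (-j) := negSet_orb h.1 j
      have hne01 : orb σ' j ≠ orb σ' (-j) := fun hc => hnegc (hO1eq.trans hc.symm)
      have hnjO0 : -j ∉ orb σ' j := fun hc => hne01 (ntOrbits_eq_orb hO0 hc)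
      have hjO1 : j ∉ orb σ' (-j) := fun hc => hne01 (ntOrbits_eq_orb hO1 hc).symm
      have hnjO1 : -j ∈ orb σ' (-j) := self_mem_orb σ' (-j)
      have hO1negSet : negSet (orb σ' (-j)) = orb σ' j := by
        rw [negSet_orb h.1, neg_neg]
      have hO0pos : orb σ' j ∈ posOrbits σ' :=
        ⟨hO0, fun hc => hnegc hc⟩
      have hO1pos : orb σ' (-j) ∈ posOrbits σ' :=
        ⟨hO1, fun hc => hne01 (hO1negSet ▸ hc)⟩
      have hmO1 := hsub _ hO1
      have hnegnotin : ∀ O ∈ negOrbits σ', j ∉ O ∧ -j ∉ O := by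
        intro O hO
        constructor
        · intro hc
          exact hnegc ((ntOrbits_eq_orb hO.1 hc) ▸ hO.2)
        · intro hc
          have h1 : O = orb σ' (-j) := ntOrbits_eq_orb hO.1 hc
          have := hO.2
          rw [h1, hO1negSet] at this
          exact hne01 this
      have e2 : ∑ᶠ O ∈ negOrbits σ, (O.ncard / 2 - 1) =
          ∑ᶠ O ∈ negOrbits σ', (O.ncard / 2 - 1) := by
        rw [himageneg, finsum_mem_image (hinj.mono (fun O hO => hO.1))]
        exact finsum_mem_congr rfl (fun O hO => by
          rw [gext_of_not_mem (hnegnotin O hO).1 (hnegnotin O hO).2])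
      have hcard0 : (gext j m (orb σ' j)).ncard = (orb σ' j).ncard + 1 := by
        rw [gext_insert1 hjO0 hnjO0, Set.ncard_insert_of_notMem hmO0.1 (orbit_finite h hO0)]
      have hcard1 : (gext j m (orb σ' (-j))).ncard = (orb σ' (-j)).ncard + 1 := by
        rw [gext_insert1' hjO1 hnjO1,
          Set.ncard_insert_of_notMem hmO1.2 (orbit_finite h hO1)]
      have hpos0 : 0 < (orb σ' j).ncard :=
        (Set.ncard_pos (orbit_finite h hO0)).mpr ⟨j, hjO0⟩
      have hpos1 : 0 < (orb σ' (-j)).ncard :=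
        (Set.ncard_pos (orbit_finite h hO1)).mpr ⟨-j, hnjO1⟩
      have e1 : ∑ᶠ O ∈ posOrbits σ, (O.ncard - 1) =
          (∑ᶠ O ∈ posOrbits σ', (O.ncard - 1)) + 2 := by
        rw [himagepos, finsum_mem_image (hinj.mono (fun O hO => hO.1))]
        refine finsum_mem_shift2 (posOrbits_finite h) _ _ (orb σ' j) (orb σ' (-j))
          hO0pos hO1pos hne01 ?_ ?_ ?_
        · rw [hcard0]; omega
        · rw [hcard1]; omega
        · intro O hO h1 h2
          have hj1 : j ∉ O := fun hc => h1 (ntOrbits_eq_orb hO.1 hc)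
          have hj2 : -j ∉ O := fun hc => h2 (ntOrbits_eq_orb hO.1 hc)
          rw [gext_of_not_mem hj1 hj2]
      have hexp : expPlus σ = expPlus σ' + 1 := by
        rw [expPlus, expPlus, e1, e2]
        omega
      rw [phi, phi, hexp, hcount]
      ring

end Tau


section Decomposition

lemma swap_neg_apply (a b x : ℤ) : Equiv.swap (-a) (-b) (-x) = -Equiv.swap a b x := by
  rcases eq_or_ne x a with rfl | h1
  · rw [Equiv.swap_apply_left, Equiv.swap_apply_left]
  rcases eq_or_ne x b with rfl | h2
  · rw [Equiv.swap_apply_right, Equiv.swap_apply_right]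
  · rw [Equiv.swap_apply_of_ne_of_ne h1 h2,
      Equiv.swap_apply_of_ne_of_ne (by omega) (by omega)]

lemma swap_pair_commute {j m : ℤ} (hj0 : j ≠ 0) (hm0 : m ≠ 0) (hjnm : j ≠ -m) :
    Equiv.swap (-j) (-m) * Equiv.swap j m = Equiv.swap j m * Equiv.swap (-j) (-m) := by
  have hdis : Equiv.Perm.Disjoint (Equiv.swap j m) (Equiv.swap (-j) (-m)) := by
    intro x
    by_cases hx : x = j ∨ x = m
    · right
      rcases hx with rfl | rfl
      · exact Equiv.swap_apply_of_ne_of_ne (by omega) (by omega)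
      · exact Equiv.swap_apply_of_ne_of_ne (by omega) (by omega)
    · left
      push_neg at hx
      exact Equiv.swap_apply_of_ne_of_ne hx.1 hx.2
  exact (hdis.commute.eq).symm

/-- The coset representatives for `B(n) ⊆ B(n+1)`. -/
def tau (n : ℕ) (j : ℤ) : Equiv.Perm ℤ :=
  if j = -((n : ℤ) + 1) then Equiv.swap ((n : ℤ) + 1) (-((n : ℤ) + 1))
  else Equiv.swap j ((n : ℤ) + 1) * Equiv.swap (-j) (-((n : ℤ) + 1))

lemma tau_of_ne {n : ℕ} {j : ℤ} (hc : j ≠ -((n : ℤ) + 1)) :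
    tau n j = Equiv.swap j ((n : ℤ) + 1) * Equiv.swap (-j) (-((n : ℤ) + 1)) := if_neg hc

lemma tau_of_eq {n : ℕ} : tau n (-((n : ℤ) + 1)) = Equiv.swap ((n : ℤ) + 1) (-((n : ℤ) + 1)) :=
  if_pos rfl

lemma tau_m {n : ℕ} : tau n ((n : ℤ) + 1) = 1 := by
  rw [tau_of_ne (by omega), Equiv.swap_self]
  apply Equiv.ext
  intro x
  simp [Equiv.swap_apply_def]

lemma tau_apply_self {n : ℕ} {j : ℤ} (hj0 : j ≠ 0) : tau n j j = (n : ℤ) + 1 := by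
  rw [tau]
  split_ifs with hc
  · rw [hc, Equiv.swap_apply_right]
  · rw [Equiv.Perm.mul_apply, Equiv.swap_apply_of_ne_of_ne (by omega) hc,
      Equiv.swap_apply_left]

lemma tau_apply_m {n : ℕ} {j : ℤ} : tau n j ((n : ℤ) + 1) = j := by
  rw [tau]
  split_ifs with hc
  · rw [Equiv.swap_apply_left, hc]
  · have h1 : Equiv.swap (-j) (-((n : ℤ) + 1)) ((n : ℤ) + 1) = (n : ℤ) + 1 :=
      Equiv.swap_apply_of_ne_of_ne (fun h => hc (by omega)) (by omega)
    rw [Equiv.Perm.mul_apply, h1, Equiv.swap_apply_right]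

lemma tau_invol {n : ℕ} {j : ℤ} (hj0 : j ≠ 0) : tau n j * tau n j = 1 := by
  rw [tau]
  split_ifs with hc
  · exact Equiv.swap_mul_self _ _
  · have hcomm := swap_pair_commute hj0 (by omega : ((n : ℤ) + 1) ≠ 0) hc
    calc Equiv.swap j ((n : ℤ) + 1) * Equiv.swap (-j) (-((n : ℤ) + 1)) *
          (Equiv.swap j ((n : ℤ) + 1) * Equiv.swap (-j) (-((n : ℤ) + 1)))
        = Equiv.swap j ((n : ℤ) + 1) *
            (Equiv.swap (-j) (-((n : ℤ) + 1)) * Equiv.swap j ((n : ℤ) + 1)) *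
            Equiv.swap (-j) (-((n : ℤ) + 1)) := by group
      _ = Equiv.swap j ((n : ℤ) + 1) *
            (Equiv.swap j ((n : ℤ) + 1) * Equiv.swap (-j) (-((n : ℤ) + 1))) *
            Equiv.swap (-j) (-((n : ℤ) + 1)) := by rw [hcomm]
      _ = (Equiv.swap j ((n : ℤ) + 1) * Equiv.swap j ((n : ℤ) + 1)) *
            (Equiv.swap (-j) (-((n : ℤ) + 1)) * Equiv.swap (-j) (-((n : ℤ) + 1))) := by group
      _ = 1 := by rw [Equiv.swap_mul_self, Equiv.swap_mul_self, one_mul]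

lemma tau_neg {n : ℕ} {j : ℤ} (hj0 : j ≠ 0) (x : ℤ) : tau n j (-x) = -tau n j x := by
  rw [tau]
  split_ifs with hc
  · have h1 := swap_neg_apply (-((n : ℤ) + 1)) ((n : ℤ) + 1) x
    rw [neg_neg] at h1
    rw [h1, Equiv.swap_comm]
  · rw [Equiv.Perm.mul_apply, Equiv.Perm.mul_apply, swap_neg_apply j ((n : ℤ) + 1) x]
    have h2 := swap_neg_apply (-j) (-((n : ℤ) + 1)) (Equiv.swap j ((n : ℤ) + 1) x)
    rw [neg_neg, neg_neg] at h2
    rw [h2]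
    have h3 := congrArg (fun e : Equiv.Perm ℤ => e x)
      (swap_pair_commute hj0 (by omega : ((n : ℤ) + 1) ≠ 0) hc)
    simp only [Equiv.Perm.mul_apply] at h3
    rw [h3]

lemma tau_fix {n : ℕ} {j : ℤ} (hjle : |j| ≤ (n : ℤ) + 1) {x : ℤ}
    (hx : (n : ℤ) + 1 < |x|) : tau n j x = x := by
  have hab := abs_le.mp hjle
  have hxc := abs_cases x
  have h1 : x ≠ j := by rcases hxc with ⟨he, -⟩ | ⟨he, -⟩ <;> omega
  have h2 : x ≠ -j := by rcases hxc with ⟨he, -⟩ | ⟨he, -⟩ <;> omega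
  have h3 : x ≠ (n : ℤ) + 1 := by rcases hxc with ⟨he, -⟩ | ⟨he, -⟩ <;> omega
  have h4 : x ≠ -((n : ℤ) + 1) := by rcases hxc with ⟨he, -⟩ | ⟨he, -⟩ <;> omega
  rw [tau]
  split_ifs with hc
  · exact Equiv.swap_apply_of_ne_of_ne h3 h4
  · rw [Equiv.Perm.mul_apply, Equiv.swap_apply_of_ne_of_ne h2 h4,
      Equiv.swap_apply_of_ne_of_ne h1 h3]

lemma Bset_mul_tau {n : ℕ} {σ' : Equiv.Perm ℤ} (h : σ' ∈ Bset n) {j : ℤ}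
    (hj0 : j ≠ 0) (hjle : |j| ≤ (n : ℤ) + 1) : σ' * tau n j ∈ Bset (n + 1) := by
  constructor
  · intro i
    rw [Equiv.Perm.mul_apply, Equiv.Perm.mul_apply, tau_neg hj0, h.1]
  · intro i hi
    have hi' : (n : ℤ) + 1 < |i| := by push_cast at hi; omega
    rw [Equiv.Perm.mul_apply, tau_fix hjle hi', h.2 i (by omega)]

lemma mul_tau_apply_self {n : ℕ} {σ' : Equiv.Perm ℤ} (h : σ' ∈ Bset n) {j : ℤ}
    (hj0 : j ≠ 0) : (σ' * tau n j) j = (n : ℤ) + 1 := by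
  rw [Equiv.Perm.mul_apply, tau_apply_self hj0,
    h.2 _ (by rw [abs_of_pos (by omega : (0:ℤ) < (n : ℤ) + 1)]; omega)]

lemma Bset_finite (n : ℕ) : (Bset n).Finite := by
  have hinj : Set.InjOn (fun σ : Equiv.Perm ℤ => permRestrict n σ) (Bset n) := by
    intro σ₁ h₁ σ₂ h₂ heq
    simp only [permRestrict, dif_pos (Bset_cond h₁), dif_pos (Bset_cond h₂)] at heq
    ext x
    rcases eq_or_ne x 0 with rfl | hx0
    · rw [Bset_zero h₁, Bset_zero h₂]
    · by_cases hxn : |x| ≤ (n : ℤ)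
      · have h3 := congrArg (fun e : Equiv.Perm (SIdx n) => (e ⟨x, hx0, hxn⟩).1) heq
        simpa [Equiv.Perm.subtypePerm_apply] using h3
      · rw [h₁.2 x (by omega), h₂.2 x (by omega)]
  exact Set.Finite.of_finite_image (Set.toFinite _) hinj

lemma bsum_zero (qp qm : ℂ) : ∑ᶠ σ ∈ Bset 0, phi qp qm σ = 1 := by
  have h : Bset 0 = {1} := by
    ext σ
    rw [Set.mem_singleton_iff]
    constructor
    · intro hσ
      apply Equiv.ext
      intro x
      rcases eq_or_ne x 0 with rfl | hx
      · rw [Bset_zero hσ]; rfl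
      · rw [hσ.2 x (by simpa using abs_pos.mpr hx)]; rfl
    · rintro rfl
      exact Bset_one
  rw [h, finsum_mem_singleton, phi_one]

lemma bsum_succ (qp qm : ℂ) (n : ℕ) :
    ∑ᶠ σ ∈ Bset (n + 1), phi qp qm σ =
      (1 + qm + 2 * (n : ℂ) * qp) * ∑ᶠ σ ∈ Bset n, phi qp qm σ := by
  classical
  set J : Finset ℤ := (Finset.Icc (-((n : ℤ) + 1)) ((n : ℤ) + 1)).erase 0 with hJ
  have memJ : ∀ j : ℤ, j ∈ J ↔ (j ≠ 0 ∧ |j| ≤ (n : ℤ) + 1) := by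
    intro j
    rw [hJ, Finset.mem_erase, Finset.mem_Icc, abs_le]
  have memT : ∀ σ, σ ∈ (Bset_finite n).toFinset ↔ σ ∈ Bset n :=
    fun σ => Set.Finite.mem_toFinset _
  have memT' : ∀ σ, σ ∈ (Bset_finite (n+1)).toFinset ↔ σ ∈ Bset (n+1) :=
    fun σ => Set.Finite.mem_toFinset _
  have inv_facts : ∀ σ ∈ Bset (n+1), σ⁻¹ ((n : ℤ) + 1) ≠ 0 ∧ |σ⁻¹ ((n : ℤ) + 1)| ≤ (n : ℤ) + 1 ∧
      σ (σ⁻¹ ((n : ℤ) + 1)) = (n : ℤ) + 1 := by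
    intro σ hσ
    have h3 : σ (σ⁻¹ ((n : ℤ) + 1)) = (n : ℤ) + 1 := Equiv.Perm.apply_inv_self σ _
    refine ⟨?_, ?_, h3⟩
    · intro hc
      rw [hc, Bset_zero hσ] at h3
      omega
    · by_contra hc
      push_neg at hc
      have h4 : σ (σ⁻¹ ((n : ℤ) + 1)) = σ⁻¹ ((n : ℤ) + 1) := hσ.2 _ (by push_cast; omega)
      rw [h3] at h4
      rw [← h4] at hc
      rw [abs_of_pos (by omega : (0:ℤ) < (n : ℤ) + 1)] at hc
      omega
  have hdown : ∀ σ ∈ Bset (n+1), σ * tau n (σ⁻¹ ((n : ℤ) + 1)) ∈ Bset n := by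
    intro σ hσ
    obtain ⟨hk0, hkle, hk⟩ := inv_facts σ hσ
    constructor
    · intro i
      rw [Equiv.Perm.mul_apply, Equiv.Perm.mul_apply, tau_neg hk0, hσ.1]
    · intro i hi
      rcases eq_or_ne i ((n : ℤ) + 1) with rfl | him
      · rw [Equiv.Perm.mul_apply, tau_apply_m, hk]
      rcases eq_or_ne i (-((n : ℤ) + 1)) with rfl | hinm
      · rw [Equiv.Perm.mul_apply, tau_neg hk0, tau_apply_m, hσ.1, hk]
      · have habs : (n : ℤ) + 1 < |i| := by
          rcases abs_cases i with ⟨he, -⟩ | ⟨he, -⟩ <;> omega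
        rw [Equiv.Perm.mul_apply, tau_fix hkle habs, hσ.2 i (by push_cast; omega)]
  rw [finsum_mem_eq_finite_toFinset_sum _ (Bset_finite (n+1)),
      finsum_mem_eq_finite_toFinset_sum _ (Bset_finite n)]
  have hbij : ∑ σ ∈ (Bset_finite (n+1)).toFinset, phi qp qm σ =
      ∑ p ∈ J ×ˢ (Bset_finite n).toFinset, phi qp qm (p.2 * tau n p.1) := by
    refine Finset.sum_bij'
      (fun σ _ => (σ⁻¹ ((n : ℤ) + 1), σ * tau n (σ⁻¹ ((n : ℤ) + 1))))
      (fun p _ => p.2 * tau n p.1) ?_ ?_ ?_ ?_ ?_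
    · intro σ hσ
      have hB := (memT' σ).mp hσ
      obtain ⟨hk0, hkle, hk⟩ := inv_facts σ hB
      rw [Finset.mem_product]
      exact ⟨(memJ _).mpr ⟨hk0, hkle⟩, (memT _).mpr (hdown σ hB)⟩
    · intro p hp
      rw [Finset.mem_product] at hp
      obtain ⟨hj0, hjle⟩ := (memJ p.1).mp hp.1
      exact (memT' _).mpr (Bset_mul_tau ((memT p.2).mp hp.2) hj0 hjle)
    · intro σ hσ
      have hB := (memT' σ).mp hσ
      obtain ⟨hk0, hkle, hk⟩ := inv_facts σ hB
      simp only
      rw [mul_assoc, tau_invol hk0, mul_one]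
    · intro p hp
      rw [Finset.mem_product] at hp
      obtain ⟨hj0, hjle⟩ := (memJ p.1).mp hp.1
      have hB := (memT p.2).mp hp.2
      have hfirst : (p.2 * tau n p.1)⁻¹ ((n : ℤ) + 1) = p.1 := by
        rw [Equiv.Perm.inv_eq_iff_eq]
        exact (mul_tau_apply_self hB hj0).symm
      rw [hfirst, mul_assoc, tau_invol hj0, mul_one]
    · intro σ hσ
      have hB := (memT' σ).mp hσ
      obtain ⟨hk0, hkle, hk⟩ := inv_facts σ hB
      simp only
      rw [mul_assoc, tau_invol hk0, mul_one]
  rw [hbij, Finset.sum_product]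
  have step2 : ∀ j ∈ J, ∑ σ' ∈ (Bset_finite n).toFinset, phi qp qm (σ' * tau n j) =
      (if j = (n : ℤ) + 1 then (1 : ℂ) else if j = -((n : ℤ) + 1) then qm else qp) *
        ∑ σ' ∈ (Bset_finite n).toFinset, phi qp qm σ' := by
    intro j hj
    obtain ⟨hj0, hjle⟩ := (memJ j).mp hj
    rw [Finset.mul_sum]
    refine Finset.sum_congr rfl fun σ' hσ' => ?_
    have hB : σ' ∈ Bset n := (memT σ').mp hσ'
    rcases eq_or_ne j ((n : ℤ) + 1) with rfl | hjm
    · rw [if_pos rfl, tau_m, mul_one, one_mul]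
    rcases eq_or_ne j (-((n : ℤ) + 1)) with rfl | hjnm
    · rw [if_neg hjm, if_pos rfl, tau_of_eq, phi_mul_swap_neg qp qm hB]
    · have hjn : |j| ≤ (n : ℤ) := by
        have := abs_le.mp hjle
        rw [abs_le]
        omega
      rw [if_neg hjm, if_neg hjnm, tau_of_ne hjnm, phi_mul_tau qp qm hB hj0 hjn]
  rw [Finset.sum_congr rfl step2, ← Finset.sum_mul]
  have hcsum : ∑ j ∈ J,
      (if j = (n : ℤ) + 1 then (1 : ℂ) else if j = -((n : ℤ) + 1) then qm else qp) =
      1 + qm + 2 * (n : ℂ) * qp := by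
    have hrw : ∀ j ∈ J,
        (if j = (n : ℤ) + 1 then (1 : ℂ) else if j = -((n : ℤ) + 1) then qm else qp) =
        qp + ((if j = (n : ℤ) + 1 then 1 - qp else 0) +
          (if j = -((n : ℤ) + 1) then qm - qp else 0)) := by
      intro j hj
      rcases eq_or_ne j ((n : ℤ) + 1) with rfl | h1
      · rw [if_pos rfl, if_pos rfl, if_neg (by omega)]
        ring
      · rcases eq_or_ne j (-((n : ℤ) + 1)) with rfl | h2
        · rw [if_neg h1, if_pos rfl, if_neg h1, if_pos rfl]
          ring
        · rw [if_neg h1, if_neg h2, if_neg h1, if_neg h2]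
          ring
    rw [Finset.sum_congr rfl hrw, Finset.sum_add_distrib, Finset.sum_add_distrib,
      Finset.sum_const, Finset.sum_ite_eq' J ((n : ℤ) + 1), Finset.sum_ite_eq' J (-((n : ℤ) + 1))]
    have hmJ : ((n : ℤ) + 1) ∈ J := (memJ _).mpr
      ⟨by omega, by rw [abs_of_pos (by omega : (0:ℤ) < (n : ℤ) + 1)]⟩
    have hnmJ : (-((n : ℤ) + 1)) ∈ J := (memJ _).mpr
      ⟨by omega, by rw [abs_neg, abs_of_pos (by omega : (0:ℤ) < (n : ℤ) + 1)]⟩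
    have hcard : J.card = 2 * n + 2 := by
      rw [hJ, Finset.card_erase_of_mem (by rw [Finset.mem_Icc]; omega), Int.card_Icc]
      omega
    rw [if_pos hmJ, if_pos hnmJ, hcard, nsmul_eq_mul]
    push_cast
    ring
  rw [hcsum]

lemma bsum_eq_prod (qp qm : ℂ) (n : ℕ) :
    ∑ᶠ σ ∈ Bset n, phi qp qm σ =
      ∏ k ∈ Finset.range n, (1 + qm + 2 * (k : ℂ) * qp) := by
  induction n with
  | zero => simpa using bsum_zero qp qm
  | succ n ih =>
      rw [bsum_succ, ih, Finset.prod_range_succ]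
      ring

end Decomposition


section Tensor

variable {α : Type*} [DecidableEq α]

lemma permRestrict_apply {n : ℕ} {σ : Equiv.Perm ℤ} (h : σ ∈ Bset n) (i : SIdx n) :
    ((permRestrict n σ) i : ℤ) = σ i.1 := by
  rw [permRestrict, dif_pos (Bset_cond h)]
  rfl

lemma act_tpow {n : ℕ} {σ : Equiv.Perm ℤ} (h : σ ∈ Bset n) (x : Hsp α) :
    act α n σ (tpow α x n) = tpow α x n := by
  rw [tpow, map_sum]
  simp only [act, Finsupp.lmapDomain_apply, Finsupp.mapDomain_single]
  refine Finset.sum_bij' (fun v _ => v ∘ (permRestrict n σ))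
    (fun w _ => w ∘ (permRestrict n σ).symm) ?_ ?_ ?_ ?_ ?_
  · intro v hv
    rw [Fintype.mem_piFinset] at hv ⊢
    intro a
    exact hv _
  · intro w hw
    rw [Fintype.mem_piFinset] at hw ⊢
    intro a
    exact hw _
  · intro v _
    funext a
    simp
  · intro w _
    funext a
    simp
  · intro v _
    exact congrArg _ (Equiv.prod_comp (permRestrict n σ) fun i => x (v i)).symm

lemma tpow_apply (x : Hsp α) (n : ℕ) (v : SIdx n → α) :
    tpow α x n v =
      if v ∈ Fintype.piFinset (fun _ : SIdx n => x.support) then ∏ i : SIdx n, x (v i)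
      else 0 := by
  rw [tpow, Finset.sum_apply']
  simp only [Finsupp.single_apply]
  exact Finset.sum_ite_eq' _ v _

lemma tpow_support (x : Hsp α) (n : ℕ) :
    (tpow α x n).support ⊆ Fintype.piFinset (fun _ : SIdx n => x.support) := by
  refine Finsupp.support_finset_sum.trans ?_
  intro v hv
  rw [Finset.mem_biUnion] at hv
  obtain ⟨w, hw, hv⟩ := hv
  have h1 : v ∈ ({w} : Finset _) := Finsupp.support_single_subset hv
  rw [Finset.mem_singleton] at h1
  subst h1
  exact hw

lemma inner00_tpow_smul (x : α →₀ ℝ) (hx : (x.sum fun _ c => c ^ 2) = 1) (n : ℕ) (c : ℂ) :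
    inner00 (tpow α (cplx x) n) (c • tpow α (cplx x) n) = c := by
  classical
  have hsupp : (cplx x).support = x.support :=
    Finsupp.support_mapRange_of_injective (by simp) x Complex.ofReal_injective
  have hsum1 : ∑ a ∈ x.support, ((x a : ℂ)) ^ 2 = 1 := by
    have h1 : ((∑ a ∈ x.support, (x a) ^ 2 : ℝ) : ℂ) = ((1 : ℝ) : ℂ) := by
      rw [← hx]
      rfl
    push_cast at h1
    simpa using h1
  rw [inner00, Finsupp.sum_of_support_subset _ (tpow_support (cplx x) n) _
    (fun v _ => by simp)]
  have hterm : ∀ v ∈ Fintype.piFinset (fun _ : SIdx n => (cplx x).support),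
      (starRingEnd ℂ) (tpow α (cplx x) n v) * (c • tpow α (cplx x) n) v
        = c * ∏ i : SIdx n, ((x (v i) : ℂ)) ^ 2 := by
    intro v hv
    rw [Finsupp.smul_apply, smul_eq_mul, tpow_apply, if_pos hv, map_prod]
    simp only [cplx, Finsupp.mapRange_apply, Complex.conj_ofReal]
    rw [Finset.prod_pow]
    ring
  rw [Finset.sum_congr rfl hterm, ← Finset.mul_sum]
  simp only [hsupp]
  rw [← Finset.prod_univ_sum (fun _ : SIdx n => x.support) (fun _ a => ((x a : ℂ)) ^ 2)]
  simp only [hsum1]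
  rw [Finset.prod_const_one, mul_one]

lemma innerQ_tpow (x : α →₀ ℝ) (hx : (x.sum fun _ c => c ^ 2) = 1) (n : ℕ) (qp qm : ℂ) :
    innerQ α n qp qm (tpow α (cplx x) n) (tpow α (cplx x) n) =
      ∑ᶠ σ ∈ Bset n, phi qp qm σ := by
  classical
  rw [innerQ, Pop, finsum_mem_eq_finite_toFinset_sum _ (Bset_finite n)]
  have h1 : (∑ σ ∈ (Bset_finite n).toFinset, phi qp qm σ • act α n σ)
      (tpow α (cplx x) n) =
      (∑ σ ∈ (Bset_finite n).toFinset, phi qp qm σ) • tpow α (cplx x) n := by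
    rw [LinearMap.sum_apply]
    rw [Finset.sum_congr rfl (fun σ hσ => by
      rw [LinearMap.smul_apply, act_tpow ((Set.Finite.mem_toFinset _).mp hσ)])]
    rw [← Finset.sum_smul]
  rw [h1, inner00_tpow_smul x hx n, finsum_mem_eq_finite_toFinset_sum _ (Bset_finite n)]

end Tensor

end Aux

/-- exclusion principle: for q₊ = −1/(M+N), q₋ = (M−N)/(M+N) and a unit
vector x ∈ H_ℝ, the deformed square norm ⟨x^{⊗2n}, x^{⊗2n}⟩_{q₊,q₋} is positive for
n ≤ M and vanishes for n > M: at most M identical particles can occupy the state x⊗x. -/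
theorem exclusion_principle (α : Type*) [DecidableEq α] (M N : ℕ) (hMN : 1 ≤ M + N)
    (x : α →₀ ℝ) (hx : (x.sum fun _ c => c ^ 2) = 1) :
    (∀ n : ℕ, n ≤ M →
      0 < innerQ α n (-1 / ((M : ℂ) + (N : ℂ))) (((M : ℂ) - (N : ℂ)) / ((M : ℂ) + (N : ℂ)))
          (tpow α (cplx x) n) (tpow α (cplx x) n)) ∧
    (∀ n : ℕ, M < n →
      innerQ α n (-1 / ((M : ℂ) + (N : ℂ))) (((M : ℂ) - (N : ℂ)) / ((M : ℂ) + (N : ℂ)))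
          (tpow α (cplx x) n) (tpow α (cplx x) n) = 0) := by
  have hMN0 : ((M : ℂ) + (N : ℂ)) ≠ 0 := by
    have h1 : (((M + N : ℕ)) : ℂ) ≠ 0 := Nat.cast_ne_zero.mpr (by omega)
    push_cast at h1
    exact h1
  have key : ∀ n : ℕ,
      innerQ α n (-1 / ((M : ℂ) + (N : ℂ))) (((M : ℂ) - (N : ℂ)) / ((M : ℂ) + (N : ℂ)))
        (tpow α (cplx x) n) (tpow α (cplx x) n) =
      ((∏ k ∈ Finset.range n, (2 * ((M : ℝ) - (k : ℝ)) / ((M : ℝ) + (N : ℝ))) : ℝ) : ℂ) := by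
    intro n
    rw [innerQ_tpow x hx n, bsum_eq_prod, Complex.ofReal_prod]
    refine Finset.prod_congr rfl fun k _ => ?_
    push_cast
    field_simp
    ring
  have hMNr : (0 : ℝ) < (M : ℝ) + (N : ℝ) := by
    have h2 : (1 : ℝ) ≤ ((M + N : ℕ) : ℝ) := by exact_mod_cast hMN
    push_cast at h2
    linarith
  constructor
  · intro n hn
    rw [key n, Complex.zero_lt_real]
    apply Finset.prod_pos
    intro k hk
    rw [Finset.mem_range] at hk
    have hkM : (k : ℝ) < (M : ℝ) := by
      have h3 : k < M := lt_of_lt_of_le hk hn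
      exact_mod_cast h3
    exact div_pos (by linarith) hMNr
  · intro n hn
    rw [key n]
    have hzero : ∏ k ∈ Finset.range n,
        (2 * ((M : ℝ) - (k : ℝ)) / ((M : ℝ) + (N : ℝ))) = 0 := by
      refine Finset.prod_eq_zero (Finset.mem_range.mpr hn) ?_
      rw [sub_self, mul_zero, zero_div]
    rw [hzero]
    simp

end TypeB
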